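/- Let σ ≥ 1 be a real number, N ∈ ℕ, and let a : ℝ → (ℤ³ → ℂ) be such that: for each n ∈ ℤ³ the map t ↦ a(t)(n) is twice continuously differentiable; a(t) is Hermitian-symmetric for every t; (∂_t² a)(t)(n) = −|n|² a(t)(n) − c_N(a(t))(n) for all t ∈ ℝ and n ∈ ℤ³; and for every T > 0, sup_{t∈[−T,T]} (‖a(t)‖_{h^σ} + ‖(∂_t a)(t)‖_{h^{σ−1}}) < ∞. Then the truncated energy E_N(t) = (1/2) ∑_{n∈ℤ³} |n|² |a(t)(n)|² + (1/2) ∑_{n∈ℤ³} |(∂_t a)(t)(n)|² + (1/4) Re ∑_{n₁,n₂,n₃,n₄∈ℤ³, |n_i|≤N for i=1,…,4, n₁+n₂+n₃+n₄=0} a(t)(n₁) a(t)(n₂) a(t)(n₃) a(t)(n₄) is independent of t (the quartic sum is a finite sum). -/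

import Mathlib

open scoped ENNReal NNReal BigOperators

noncomputable section

/-- The square of the Euclidean norm of a lattice point `n ∈ ℤ³`, as an integer. -/
def nsqZ (n : Fin 3 → ℤ) : ℤ := ∑ i, (n i)^2

/-- The squared Sobolev norm `‖a‖²_{h^σ} = ∑_{n∈ℤ³} ⟨n⟩^{2σ}|a(n)|²` in `[0,∞]`,
with `⟨n⟩^{2σ} = (1+|n|²)^σ`. -/
def hNormSq (σ : ℝ) (a : (Fin 3 → ℤ) → ℂ) : ℝ≥0∞ :=
  ∑' n : Fin 3 → ℤ, ENNReal.ofReal ((1 + (nsqZ n : ℝ)) ^ σ) * (‖a n‖₊ : ℝ≥0∞)^2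

/-- Hermitian symmetry `a(−n) = conj(a(n))`, corresponding to real-valued `u`. -/
def HermSymm (a : (Fin 3 → ℤ) → ℂ) : Prop :=
  ∀ n, a (-n) = (starRingEnd ℂ) (a n)

/-- The lattice points `n ∈ ℤ³` with Euclidean norm `|n| ≤ N`, as a finite set. -/
def latticeBall (N : ℕ) : Finset (Fin 3 → ℤ) :=
  (Finset.Icc (fun _ => -(N : ℤ)) (fun _ => (N : ℤ))).filter (fun m => nsqZ m ≤ (N : ℤ)^2)

/-- The truncated cubic convolution `c_N(a)(n)`: zero for `|n| > N`, and
`∑_{n₁+n₂+n₃=n, |nᵢ|≤N} a(n₁)a(n₂)a(n₃)` for `|n| ≤ N`. -/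
def cubicTrunc (N : ℕ) (a : (Fin 3 → ℤ) → ℂ) (n : Fin 3 → ℤ) : ℂ :=
  if nsqZ n ≤ (N : ℤ)^2 then
    ∑ m ∈ latticeBall N, ∑ k ∈ latticeBall N,
      (if nsqZ (n - m - k) ≤ (N : ℤ)^2 then a m * a k * a (n - m - k) else 0)
  else 0

/-- The Fourier-side truncated energy
`E_N(t) = ½ ∑ |n|²|a(n)|² + ½ ∑ |∂ₜa(n)|² + ¼ Re ∑_{n₁+n₂+n₃+n₄=0, |nᵢ|≤N} a(n₁)a(n₂)a(n₃)a(n₄)`. -/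
def truncEnergy (N : ℕ) (a : ℝ → (Fin 3 → ℤ) → ℂ) (t : ℝ) : ℝ :=
  (1/2) * (∑' n : Fin 3 → ℤ, (nsqZ n : ℝ) * ‖a t n‖^2)
    + (1/2) * (∑' n : Fin 3 → ℤ, ‖deriv (fun t' => a t' n) t‖^2)
    + (1/4) * (∑ n₁ ∈ latticeBall N, ∑ n₂ ∈ latticeBall N, ∑ n₃ ∈ latticeBall N,
        (if nsqZ (n₁ + n₂ + n₃) ≤ (N : ℤ)^2 then
          a t n₁ * a t n₂ * a t n₃ * a t (-(n₁ + n₂ + n₃)) else 0)).re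

lemma hasDerivAt_complexRe {F : ℝ → ℂ} {F' : ℂ} {x : ℝ} (h : HasDerivAt F F' x) :
    HasDerivAt (fun t => (F t).re) F'.re x :=
  Complex.reCLM.hasFDerivAt.comp_hasDerivAt x h

lemma star_mul_self_re (z : ℂ) : (star z * z).re = ‖z‖^2 := by
  simp [Complex.mul_re, Complex.conj_re, Complex.conj_im, Complex.sq_norm,
    Complex.normSq_apply]

lemma nsqZ_nonneg (n : Fin 3 → ℤ) : 0 ≤ nsqZ n :=
  Finset.sum_nonneg (fun i _ => sq_nonneg _)

lemma nsqZ_neg (n : Fin 3 → ℤ) : nsqZ (-n) = nsqZ n := by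
  simp [nsqZ]

lemma mem_latticeBall {N : ℕ} {n : Fin 3 → ℤ} :
    n ∈ latticeBall N ↔ nsqZ n ≤ (N : ℤ)^2 := by
  constructor
  · intro h; exact (Finset.mem_filter.mp h).2
  · intro h
    refine Finset.mem_filter.mpr ⟨Finset.mem_Icc.mpr ⟨?_, ?_⟩, h⟩ <;>
    · intro i
      have hi : (n i)^2 ≤ (N : ℤ)^2 := by
        have := Finset.single_le_sum (f := fun j => (n j)^2) (fun j _ => sq_nonneg _)
          (Finset.mem_univ i)
        exact this.trans h
      have hN : (0:ℤ) ≤ (N:ℤ) := Int.natCast_nonneg N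
      simp only []
      nlinarith [sq_nonneg (n i + (N:ℤ)), sq_nonneg (n i - (N:ℤ))]

lemma neg_mem_latticeBall {N : ℕ} {n : Fin 3 → ℤ} (h : n ∈ latticeBall N) :
    -n ∈ latticeBall N := by
  rw [mem_latticeBall] at h ⊢; rwa [nsqZ_neg]

lemma summable_A {σ : ℝ} (hσ : 1 ≤ σ) {b : (Fin 3 → ℤ) → ℂ} (h : hNormSq σ b ≠ ⊤) :
    Summable (fun n => (nsqZ n : ℝ) * ‖b n‖^2) := by
  have h0 : ∀ n : Fin 3 → ℤ, (0:ℝ) ≤ (nsqZ n : ℝ) := fun n => by exact_mod_cast nsqZ_nonneg n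
  have hle : ∀ n : Fin 3 → ℤ, ENNReal.ofReal ((nsqZ n : ℝ)) * (‖b n‖₊ : ℝ≥0∞)^2
      ≤ ENNReal.ofReal ((1 + (nsqZ n : ℝ)) ^ σ) * (‖b n‖₊ : ℝ≥0∞)^2 := by
    intro n
    refine mul_le_mul_left (ENNReal.ofReal_le_ofReal ?_) _
    calc (nsqZ n : ℝ) ≤ 1 + (nsqZ n : ℝ) := by linarith
    _ = (1 + (nsqZ n : ℝ)) ^ (1:ℝ) := (Real.rpow_one _).symm
    _ ≤ (1 + (nsqZ n : ℝ)) ^ σ := Real.rpow_le_rpow_of_exponent_le (by linarith [h0 n]) hσ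
  have htop : ∑' n, ENNReal.ofReal ((nsqZ n : ℝ)) * (‖b n‖₊ : ℝ≥0∞)^2 ≠ ⊤ :=
    ne_top_of_le_ne_top h (ENNReal.tsum_le_tsum hle)
  refine (ENNReal.summable_toReal htop).congr (fun n => ?_)
  rw [ENNReal.toReal_mul, ENNReal.toReal_ofReal (h0 n)]
  norm_cast

lemma summable_B {σ : ℝ} (hσ : 0 ≤ σ) {b : (Fin 3 → ℤ) → ℂ} (h : hNormSq σ b ≠ ⊤) :
    Summable (fun n => ‖b n‖^2) := by
  have h0 : ∀ n : Fin 3 → ℤ, (0:ℝ) ≤ (nsqZ n : ℝ) := fun n => by exact_mod_cast nsqZ_nonneg n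
  have hle : ∀ n : Fin 3 → ℤ, (‖b n‖₊ : ℝ≥0∞)^2
      ≤ ENNReal.ofReal ((1 + (nsqZ n : ℝ)) ^ σ) * (‖b n‖₊ : ℝ≥0∞)^2 := by
    intro n
    conv_lhs => rw [← one_mul ((‖b n‖₊ : ℝ≥0∞)^2)]
    refine mul_le_mul_left (ENNReal.one_le_ofReal.mpr ?_) _
    exact Real.one_le_rpow (by linarith [h0 n]) hσ
  have htop : ∑' n, (‖b n‖₊ : ℝ≥0∞)^2 ≠ ⊤ :=
    ne_top_of_le_ne_top h (ENNReal.tsum_le_tsum hle)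
  refine (ENNReal.summable_toReal htop).congr (fun n => ?_)
  simp [← ENNReal.coe_pow]

/-- The filtered triple-product index set for the quartic sum. -/
def TTset (N : ℕ) : Finset ((Fin 3 → ℤ) × (Fin 3 → ℤ) × (Fin 3 → ℤ)) :=
  (latticeBall N ×ˢ latticeBall N ×ˢ latticeBall N).filter
    (fun p => nsqZ (p.1 + p.2.1 + p.2.2) ≤ (N:ℤ)^2)

lemma mem_TTset {N : ℕ} {p : (Fin 3 → ℤ) × (Fin 3 → ℤ) × (Fin 3 → ℤ)} :
    p ∈ TTset N ↔ (nsqZ p.1 ≤ (N:ℤ)^2 ∧ nsqZ p.2.1 ≤ (N:ℤ)^2 ∧ nsqZ p.2.2 ≤ (N:ℤ)^2)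
      ∧ nsqZ (p.1 + p.2.1 + p.2.2) ≤ (N:ℤ)^2 := by
  simp [TTset, Finset.mem_filter, Finset.mem_product, mem_latticeBall]

lemma tripleSum_add (N : ℕ) (f : (Fin 3 → ℤ) → (Fin 3 → ℤ) → (Fin 3 → ℤ) → ℂ) :
    (∑ n₁ ∈ latticeBall N, ∑ n₂ ∈ latticeBall N, ∑ n₃ ∈ latticeBall N,
      (if nsqZ (n₁ + n₂ + n₃) ≤ (N:ℤ)^2 then f n₁ n₂ n₃ else 0))
    = ∑ p ∈ TTset N, f p.1 p.2.1 p.2.2 := by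
  rw [TTset, Finset.sum_filter, Finset.sum_product]
  refine Finset.sum_congr rfl fun n₁ _ => ?_
  rw [Finset.sum_product]

lemma tripleSum_sub (N : ℕ) (f : (Fin 3 → ℤ) → (Fin 3 → ℤ) → (Fin 3 → ℤ) → ℂ) :
    (∑ n₁ ∈ latticeBall N, ∑ n₂ ∈ latticeBall N, ∑ n₃ ∈ latticeBall N,
      (if nsqZ (n₁ - n₂ - n₃) ≤ (N:ℤ)^2 then f n₁ n₂ n₃ else 0))
    = ∑ p ∈ (latticeBall N ×ˢ latticeBall N ×ˢ latticeBall N).filter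
        (fun p => nsqZ (p.1 - p.2.1 - p.2.2) ≤ (N:ℤ)^2), f p.1 p.2.1 p.2.2 := by
  rw [Finset.sum_filter, Finset.sum_product]
  refine Finset.sum_congr rfl fun n₁ _ => ?_
  rw [Finset.sum_product]

lemma TT_swap12 (N : ℕ) (f : (Fin 3 → ℤ) → (Fin 3 → ℤ) → (Fin 3 → ℤ) → ℂ) :
    ∑ p ∈ TTset N, f p.1 p.2.1 p.2.2 = ∑ p ∈ TTset N, f p.2.1 p.1 p.2.2 := by
  refine Finset.sum_nbij' (fun p => (p.2.1, p.1, p.2.2)) (fun p => (p.2.1, p.1, p.2.2))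
    ?_ ?_ ?_ ?_ ?_
  · intro p hp; rw [mem_TTset] at hp ⊢
    refine ⟨⟨hp.1.2.1, hp.1.1, hp.1.2.2⟩, ?_⟩
    rw [show p.2.1 + p.1 + p.2.2 = p.1 + p.2.1 + p.2.2 from by ring]; exact hp.2
  · intro p hp; rw [mem_TTset] at hp ⊢
    refine ⟨⟨hp.1.2.1, hp.1.1, hp.1.2.2⟩, ?_⟩
    rw [show p.2.1 + p.1 + p.2.2 = p.1 + p.2.1 + p.2.2 from by ring]; exact hp.2
  · intro p _; rfl
  · intro p _; rfl
  · intro p _; rfl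

lemma TT_swap13 (N : ℕ) (f : (Fin 3 → ℤ) → (Fin 3 → ℤ) → (Fin 3 → ℤ) → ℂ) :
    ∑ p ∈ TTset N, f p.1 p.2.1 p.2.2 = ∑ p ∈ TTset N, f p.2.2 p.2.1 p.1 := by
  refine Finset.sum_nbij' (fun p => (p.2.2, p.2.1, p.1)) (fun p => (p.2.2, p.2.1, p.1))
    ?_ ?_ ?_ ?_ ?_
  · intro p hp; rw [mem_TTset] at hp ⊢
    refine ⟨⟨hp.1.2.2, hp.1.2.1, hp.1.1⟩, ?_⟩
    rw [show p.2.2 + p.2.1 + p.1 = p.1 + p.2.1 + p.2.2 from by ring]; exact hp.2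
  · intro p hp; rw [mem_TTset] at hp ⊢
    refine ⟨⟨hp.1.2.2, hp.1.2.1, hp.1.1⟩, ?_⟩
    rw [show p.2.2 + p.2.1 + p.1 = p.1 + p.2.1 + p.2.2 from by ring]; exact hp.2
  · intro p _; rfl
  · intro p _; rfl
  · intro p _; rfl

lemma TT_inv (N : ℕ) (f : (Fin 3 → ℤ) → (Fin 3 → ℤ) → (Fin 3 → ℤ) → ℂ) :
    ∑ p ∈ TTset N, f p.1 p.2.1 p.2.2
    = ∑ p ∈ TTset N, f (-(p.1 + p.2.1 + p.2.2)) p.2.1 p.2.2 := by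
  refine Finset.sum_nbij' (fun p => (-(p.1 + p.2.1 + p.2.2), p.2.1, p.2.2))
    (fun p => (-(p.1 + p.2.1 + p.2.2), p.2.1, p.2.2)) ?_ ?_ ?_ ?_ ?_
  · intro p hp; rw [mem_TTset] at hp ⊢
    refine ⟨⟨by rw [nsqZ_neg]; exact hp.2, hp.1.2.1, hp.1.2.2⟩, ?_⟩
    rw [show -(p.1 + p.2.1 + p.2.2) + p.2.1 + p.2.2 = -p.1 from by ring, nsqZ_neg]
    exact hp.1.1
  · intro p hp; rw [mem_TTset] at hp ⊢
    refine ⟨⟨by rw [nsqZ_neg]; exact hp.2, hp.1.2.1, hp.1.2.2⟩, ?_⟩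
    rw [show -(p.1 + p.2.1 + p.2.2) + p.2.1 + p.2.2 = -p.1 from by ring, nsqZ_neg]
    exact hp.1.1
  · intro p _
    have h : -(-(p.1 + p.2.1 + p.2.2) + p.2.1 + p.2.2) = p.1 := by ring
    simp only [h]
  · intro p _
    have h : -(-(p.1 + p.2.1 + p.2.2) + p.2.1 + p.2.2) = p.1 := by ring
    simp only [h]
  · intro p _
    have h : -(-(p.1 + p.2.1 + p.2.2) + p.2.1 + p.2.2) = p.1 := by ring
    simp only [h]

lemma four_eq (N : ℕ) (b e : (Fin 3 → ℤ) → ℂ) :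
    ∑ p ∈ TTset N, (e p.1 * b p.2.1 * b p.2.2 * b (-(p.1 + p.2.1 + p.2.2))
      + b p.1 * e p.2.1 * b p.2.2 * b (-(p.1 + p.2.1 + p.2.2))
      + b p.1 * b p.2.1 * e p.2.2 * b (-(p.1 + p.2.1 + p.2.2))
      + b p.1 * b p.2.1 * b p.2.2 * e (-(p.1 + p.2.1 + p.2.2)))
    = 4 * ∑ p ∈ TTset N, e p.1 * b p.2.1 * b p.2.2 * b (-(p.1 + p.2.1 + p.2.2)) := by
  rw [Finset.sum_add_distrib, Finset.sum_add_distrib, Finset.sum_add_distrib]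
  have h2 : ∑ p ∈ TTset N, b p.1 * e p.2.1 * b p.2.2 * b (-(p.1 + p.2.1 + p.2.2))
      = ∑ p ∈ TTset N, e p.1 * b p.2.1 * b p.2.2 * b (-(p.1 + p.2.1 + p.2.2)) := by
    refine (TT_swap12 N (fun x y z => b x * e y * b z * b (-(x + y + z)))).trans
      (Finset.sum_congr rfl fun p _ => ?_)
    show b p.2.1 * e p.1 * b p.2.2 * b (-(p.2.1 + p.1 + p.2.2)) = _
    rw [show p.2.1 + p.1 + p.2.2 = p.1 + p.2.1 + p.2.2 from by ring]; ring
  have h3 : ∑ p ∈ TTset N, b p.1 * b p.2.1 * e p.2.2 * b (-(p.1 + p.2.1 + p.2.2))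
      = ∑ p ∈ TTset N, e p.1 * b p.2.1 * b p.2.2 * b (-(p.1 + p.2.1 + p.2.2)) := by
    refine (TT_swap13 N (fun x y z => b x * b y * e z * b (-(x + y + z)))).trans
      (Finset.sum_congr rfl fun p _ => ?_)
    show b p.2.2 * b p.2.1 * e p.1 * b (-(p.2.2 + p.2.1 + p.1)) = _
    rw [show p.2.2 + p.2.1 + p.1 = p.1 + p.2.1 + p.2.2 from by ring]; ring
  have h4 : ∑ p ∈ TTset N, b p.1 * b p.2.1 * b p.2.2 * e (-(p.1 + p.2.1 + p.2.2))
      = ∑ p ∈ TTset N, e p.1 * b p.2.1 * b p.2.2 * b (-(p.1 + p.2.1 + p.2.2)) := by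
    refine Eq.symm ((TT_inv N (fun x y z => e x * b y * b z * b (-(x + y + z)))).trans
      (Finset.sum_congr rfl fun p _ => ?_))
    show e (-(p.1 + p.2.1 + p.2.2)) * b p.2.1 * b p.2.2
        * b (-(-(p.1 + p.2.1 + p.2.2) + p.2.1 + p.2.2)) = _
    rw [show -(-(p.1 + p.2.1 + p.2.2) + p.2.1 + p.2.2) = p.1 from by ring]; ring
  rw [h2, h3, h4]; ring

lemma cancel_sum (N : ℕ) (b e : (Fin 3 → ℤ) → ℂ)
    (hb : ∀ n, b (-n) = (starRingEnd ℂ) (b n)) :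
    ∑ n ∈ latticeBall N, (starRingEnd ℂ) (cubicTrunc N b n) * e n
    = ∑ p ∈ TTset N, e p.1 * b p.2.1 * b p.2.2 * b (-(p.1 + p.2.1 + p.2.2)) := by
  have step1 : ∀ n ∈ latticeBall N, (starRingEnd ℂ) (cubicTrunc N b n) * e n
      = ∑ m ∈ latticeBall N, ∑ k ∈ latticeBall N,
          (if nsqZ (n - m - k) ≤ (N:ℤ)^2 then b (-m) * b (-k) * b (-(n - m - k)) * e n
           else 0) := by
    intro n hn
    rw [cubicTrunc, if_pos (mem_latticeBall.mp hn), map_sum, Finset.sum_mul]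
    refine Finset.sum_congr rfl fun m _ => ?_
    rw [map_sum, Finset.sum_mul]
    refine Finset.sum_congr rfl fun k _ => ?_
    rw [apply_ite (starRingEnd ℂ), map_zero, ite_mul, zero_mul, map_mul, map_mul]
    by_cases hc : nsqZ (n - m - k) ≤ (N:ℤ)^2
    · rw [if_pos hc, if_pos hc, ← hb m, ← hb k, ← hb (n - m - k)]
    · rw [if_neg hc, if_neg hc]
  rw [Finset.sum_congr rfl step1,
    tripleSum_sub N (fun x y z => b (-y) * b (-z) * b (-(x - y - z)) * e x)]
  refine Finset.sum_nbij' (fun p => (p.1, -p.2.1, -p.2.2)) (fun p => (p.1, -p.2.1, -p.2.2))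
    ?_ ?_ ?_ ?_ ?_
  · intro p hp
    rw [Finset.mem_filter, Finset.mem_product, Finset.mem_product] at hp
    rw [mem_TTset]
    refine ⟨⟨mem_latticeBall.mp hp.1.1, ?_, ?_⟩, ?_⟩
    · rw [nsqZ_neg]; exact mem_latticeBall.mp hp.1.2.1
    · rw [nsqZ_neg]; exact mem_latticeBall.mp hp.1.2.2
    · rw [show p.1 + -p.2.1 + -p.2.2 = p.1 - p.2.1 - p.2.2 from by ring]; exact hp.2
  · intro p hp
    rw [mem_TTset] at hp
    rw [Finset.mem_filter, Finset.mem_product, Finset.mem_product]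
    refine ⟨⟨mem_latticeBall.mpr hp.1.1, ?_, ?_⟩, ?_⟩
    · exact mem_latticeBall.mpr (by rw [nsqZ_neg]; exact hp.1.2.1)
    · exact mem_latticeBall.mpr (by rw [nsqZ_neg]; exact hp.1.2.2)
    · rw [show p.1 - -p.2.1 - -p.2.2 = p.1 + p.2.1 + p.2.2 from by ring]; exact hp.2
  · intro p _; simp only [neg_neg]
  · intro p _; simp only [neg_neg]
  · intro p _
    show b (-p.2.1) * b (-p.2.2) * b (-(p.1 - p.2.1 - p.2.2)) * e p.1
      = e p.1 * b (-p.2.1) * b (-p.2.2) * b (-(p.1 + -p.2.1 + -p.2.2))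
    rw [show p.1 + -p.2.1 + -p.2.2 = p.1 - p.2.1 - p.2.2 from by ring]; ring

lemma mode_hasDeriv {g : ℝ → ℂ} {c : ℝ} {C : ℂ} {t : ℝ}
    (hgd : Differentiable ℝ g) (hdd : Differentiable ℝ (deriv g))
    (hode : deriv (deriv g) t = -(c : ℂ) * g t - C) :
    HasDerivAt (fun s => c * ‖g s‖^2 + ‖deriv g s‖^2)
      (-2 * ((starRingEnd ℂ) C * deriv g t).re) t := by
  have hA : HasDerivAt g (deriv g t) t := (hgd t).hasDerivAt
  have hD : HasDerivAt (deriv g) (-(c:ℂ) * g t - C) t := by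
    have := (hdd t).hasDerivAt; rwa [hode] at this
  have h1 := hA.star.mul hA
  have h2 := hD.star.mul hD
  have final := ((hasDerivAt_complexRe h1).const_mul c).add (hasDerivAt_complexRe h2)
  have heq : (fun s => c * ‖g s‖^2 + ‖deriv g s‖^2)
      = (fun s => c * (star (g s) * g s).re + (star (deriv g s) * deriv g s).re) := by
    funext s; rw [star_mul_self_re, star_mul_self_re]
  rw [heq]
  refine final.congr_deriv ?_
  simp only [Complex.star_def, map_mul, map_sub, map_neg, Complex.add_re, Complex.sub_re,
    Complex.neg_re, Complex.mul_re, Complex.conj_re, Complex.conj_im, Complex.ofReal_re,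
    Complex.ofReal_im, Complex.add_im, Complex.sub_im, Complex.neg_im, Complex.mul_im,
    Complex.conj_conj]
  ring

lemma quartic_hasDeriv (N : ℕ) (a : ℝ → (Fin 3 → ℤ) → ℂ)
    (hgd : ∀ n, Differentiable ℝ (fun t => a t n)) (t : ℝ) :
    HasDerivAt (fun s => ∑ n₁ ∈ latticeBall N, ∑ n₂ ∈ latticeBall N, ∑ n₃ ∈ latticeBall N,
        (if nsqZ (n₁ + n₂ + n₃) ≤ (N:ℤ)^2 then
          a s n₁ * a s n₂ * a s n₃ * a s (-(n₁ + n₂ + n₃)) else 0))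
      (∑ n₁ ∈ latticeBall N, ∑ n₂ ∈ latticeBall N, ∑ n₃ ∈ latticeBall N,
        (if nsqZ (n₁ + n₂ + n₃) ≤ (N:ℤ)^2 then
          deriv (fun t' => a t' n₁) t * a t n₂ * a t n₃ * a t (-(n₁ + n₂ + n₃))
          + a t n₁ * deriv (fun t' => a t' n₂) t * a t n₃ * a t (-(n₁ + n₂ + n₃))
          + a t n₁ * a t n₂ * deriv (fun t' => a t' n₃) t * a t (-(n₁ + n₂ + n₃))
          + a t n₁ * a t n₂ * a t n₃ * deriv (fun t' => a t' (-(n₁ + n₂ + n₃))) t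
         else 0)) t := by
  refine HasDerivAt.fun_sum fun n₁ _ => HasDerivAt.fun_sum fun n₂ _ => HasDerivAt.fun_sum fun n₃ _ => ?_
  by_cases hc : nsqZ (n₁ + n₂ + n₃) ≤ (N:ℤ)^2
  · simp only [if_pos hc]
    have h1 : HasDerivAt (fun s => a s n₁) (deriv (fun t' => a t' n₁) t) t :=
      ((hgd n₁) t).hasDerivAt
    have h2 : HasDerivAt (fun s => a s n₂) (deriv (fun t' => a t' n₂) t) t :=
      ((hgd n₂) t).hasDerivAt
    have h3 : HasDerivAt (fun s => a s n₃) (deriv (fun t' => a t' n₃) t) t :=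
      ((hgd n₃) t).hasDerivAt
    have h4 : HasDerivAt (fun s => a s (-(n₁ + n₂ + n₃)))
        (deriv (fun t' => a t' (-(n₁ + n₂ + n₃))) t) t := ((hgd _) t).hasDerivAt
    have H := ((h1.mul h2).mul h3).mul h4
    refine H.congr_deriv ?_
    simp only [Pi.mul_apply]
    ring
  · simp only [if_neg hc]
    exact hasDerivAt_const _ _

/-- Conservation of the truncated energy (equation (2.3) of the paper): for any global `C²`,
Hermitian-symmetric, locally `𝓗^σ`-bounded solution of the truncated NLW system
`∂ₜ²a(n) = −|n|²a(n) − c_N(a)(n)` with `σ ≥ 1`, the energy `E_N(t)` is independent of `t`. -/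
theorem truncated_energy_conservation (σ : ℝ) (hσ : 1 ≤ σ) (N : ℕ)
    (a : ℝ → (Fin 3 → ℤ) → ℂ)
    (hreg : ∀ n, ContDiff ℝ 2 (fun t => a t n))
    (hsym : ∀ t, HermSymm (a t))
    (hode : ∀ t n, deriv (deriv (fun t' => a t' n)) t
      = -(((nsqZ n : ℝ)) : ℂ) * a t n - cubicTrunc N (a t) n)
    (hbdd : ∀ T : ℝ, 0 < T → ∃ M : ℝ≥0∞, M ≠ ⊤ ∧ ∀ t ∈ Set.Icc (-T) T,
        hNormSq σ (a t) ^ (1/2 : ℝ)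
          + hNormSq (σ - 1) (fun n => deriv (fun t' => a t' n) t) ^ (1/2 : ℝ) ≤ M) :
    ∀ t₁ t₂ : ℝ, truncEnergy N a t₁ = truncEnergy N a t₂ := by
  intro t₁ t₂
  have hgd : ∀ n, Differentiable ℝ (fun t => a t n) :=
    fun n => (hreg n).differentiable (by norm_num)
  have hdd : ∀ n, Differentiable ℝ (deriv (fun t => a t n)) := fun n =>
    ((contDiff_succ_iff_deriv.mp
      (by exact_mod_cast (hreg n) : ContDiff ℝ ((1:ℕ)+1) (fun t => a t n))).2.2).differentiable
      (by norm_num)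
  have hfin : ∀ t : ℝ, hNormSq σ (a t) ≠ ⊤ ∧
      hNormSq (σ - 1) (fun n => deriv (fun t' => a t' n) t) ≠ ⊤ := by
    intro t
    obtain ⟨M, hM, hMb⟩ := hbdd (|t| + 1) (by positivity)
    have ht : t ∈ Set.Icc (-(|t| + 1)) (|t| + 1) :=
      ⟨by linarith [neg_abs_le t], by linarith [le_abs_self t]⟩
    have h := hMb t ht
    constructor
    · intro hc
      rw [hc, ENNReal.top_rpow_of_pos (by norm_num), top_add] at h
      exact hM (top_le_iff.mp h)
    · intro hc
      rw [hc, ENNReal.top_rpow_of_pos (by norm_num), add_top] at h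
      exact hM (top_le_iff.mp h)
  have hsA : ∀ t : ℝ, Summable (fun n => (nsqZ n : ℝ) * ‖a t n‖^2) :=
    fun t => summable_A hσ (hfin t).1
  have hsB : ∀ t : ℝ, Summable (fun n => ‖deriv (fun t' => a t' n) t‖^2) :=
    fun t => summable_B (by linarith) (hfin t).2
  -- splitting of the energy into the finite part and the tail
  have hsplit : ∀ t : ℝ, truncEnergy N a t
      = ((1/2) * ∑ n ∈ latticeBall N,
            ((nsqZ n : ℝ) * ‖a t n‖^2 + ‖deriv (fun t' => a t' n) t‖^2)
          + (1/4) * (∑ n₁ ∈ latticeBall N, ∑ n₂ ∈ latticeBall N, ∑ n₃ ∈ latticeBall N,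
              (if nsqZ (n₁ + n₂ + n₃) ≤ (N : ℤ)^2 then
                a t n₁ * a t n₂ * a t n₃ * a t (-(n₁ + n₂ + n₃)) else 0)).re)
        + (1/2) * ∑' (n : ↑((latticeBall N : Set (Fin 3 → ℤ))ᶜ)),
            ((nsqZ n.1 : ℝ) * ‖a t n.1‖^2 + ‖deriv (fun t' => a t' n.1) t‖^2) := by
    intro t
    have h1 := Summable.sum_add_tsum_compl (s := latticeBall N) (hsA t)
    have h2 := Summable.sum_add_tsum_compl (s := latticeBall N) (hsB t)
    have h3 : ∑' (n : ↑((latticeBall N : Set (Fin 3 → ℤ))ᶜ)),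
          ((nsqZ n.1 : ℝ) * ‖a t n.1‖^2 + ‖deriv (fun t' => a t' n.1) t‖^2)
        = (∑' (n : ↑((latticeBall N : Set (Fin 3 → ℤ))ᶜ)), (nsqZ n.1 : ℝ) * ‖a t n.1‖^2)
          + ∑' (n : ↑((latticeBall N : Set (Fin 3 → ℤ))ᶜ)),
              ‖deriv (fun t' => a t' n.1) t‖^2 :=
      Summable.tsum_add ((hsA t).subtype _) ((hsB t).subtype _)
    rw [truncEnergy, ← h1, ← h2, h3, Finset.sum_add_distrib]
    ring
  -- the tail is conserved mode by mode
  have htail : ∀ n : Fin 3 → ℤ, n ∉ latticeBall N → ∀ s₁ s₂ : ℝ,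
      (nsqZ n : ℝ) * ‖a s₁ n‖^2 + ‖deriv (fun t' => a t' n) s₁‖^2
      = (nsqZ n : ℝ) * ‖a s₂ n‖^2 + ‖deriv (fun t' => a t' n) s₂‖^2 := by
    intro n hn s₁ s₂
    have hC : ∀ s : ℝ, cubicTrunc N (a s) n = 0 :=
      fun s => if_neg (fun hc => hn (mem_latticeBall.mpr hc))
    have hD : ∀ s : ℝ, HasDerivAt
        (fun u => (nsqZ n : ℝ) * ‖a u n‖^2 + ‖deriv (fun t' => a t' n) u‖^2) 0 s := by
      intro s
      have h := mode_hasDeriv (C := 0) (hgd n) (hdd n) (by rw [hode s n, hC s])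
      simpa only [map_zero, zero_mul, Complex.zero_re, mul_zero, neg_zero] using h
    exact is_const_of_deriv_eq_zero (fun s => (hD s).differentiableAt)
      (fun s => (hD s).deriv) s₁ s₂
  -- the finite part is conserved
  have hG : ∀ s : ℝ, HasDerivAt (fun u =>
      (1/2) * ∑ n ∈ latticeBall N,
          ((nsqZ n : ℝ) * ‖a u n‖^2 + ‖deriv (fun t' => a t' n) u‖^2)
      + (1/4) * (∑ n₁ ∈ latticeBall N, ∑ n₂ ∈ latticeBall N, ∑ n₃ ∈ latticeBall N,
          (if nsqZ (n₁ + n₂ + n₃) ≤ (N : ℤ)^2 then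
            a u n₁ * a u n₂ * a u n₃ * a u (-(n₁ + n₂ + n₃)) else 0)).re) 0 s := by
    intro s
    have hpart1 : HasDerivAt (fun u => ∑ n ∈ latticeBall N,
        ((nsqZ n : ℝ) * ‖a u n‖^2 + ‖deriv (fun t' => a t' n) u‖^2))
        (∑ n ∈ latticeBall N, -2 * ((starRingEnd ℂ) (cubicTrunc N (a s) n)
          * deriv (fun t' => a t' n) s).re) s :=
      HasDerivAt.fun_sum fun n _ => mode_hasDeriv (hgd n) (hdd n) (hode s n)
    have hpart2 := hasDerivAt_complexRe (quartic_hasDeriv N a hgd s)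
    have total := (hpart1.const_mul (1/2 : ℝ)).add (hpart2.const_mul (1/4 : ℝ))
    refine total.congr_deriv ?_
    have hc := cancel_sum N (a s) (fun n => deriv (fun t' => a t' n) s) (hsym s)
    have hq : (∑ n₁ ∈ latticeBall N, ∑ n₂ ∈ latticeBall N, ∑ n₃ ∈ latticeBall N,
        (if nsqZ (n₁ + n₂ + n₃) ≤ (N:ℤ)^2 then
          deriv (fun t' => a t' n₁) s * a s n₂ * a s n₃ * a s (-(n₁ + n₂ + n₃))
          + a s n₁ * deriv (fun t' => a t' n₂) s * a s n₃ * a s (-(n₁ + n₂ + n₃))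
          + a s n₁ * a s n₂ * deriv (fun t' => a t' n₃) s * a s (-(n₁ + n₂ + n₃))
          + a s n₁ * a s n₂ * a s n₃ * deriv (fun t' => a t' (-(n₁ + n₂ + n₃))) s
         else 0))
        = 4 * ∑ p ∈ TTset N, deriv (fun t' => a t' p.1) s * a s p.2.1 * a s p.2.2
            * a s (-(p.1 + p.2.1 + p.2.2)) :=
      (tripleSum_add N (fun x y z =>
        deriv (fun t' => a t' x) s * a s y * a s z * a s (-(x + y + z))
        + a s x * deriv (fun t' => a t' y) s * a s z * a s (-(x + y + z))
        + a s x * a s y * deriv (fun t' => a t' z) s * a s (-(x + y + z))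
        + a s x * a s y * a s z * deriv (fun t' => a t' (-(x + y + z))) s)).trans
      (four_eq N (a s) (fun n => deriv (fun t' => a t' n) s))
    rw [hq, ← Finset.mul_sum, ← Complex.re_sum, hc]
    simp only [Complex.mul_re, Complex.re_ofNat, Complex.im_ofNat]
    ring
  have hGconst := is_const_of_deriv_eq_zero (f := fun u =>
      (1/2) * ∑ n ∈ latticeBall N,
          ((nsqZ n : ℝ) * ‖a u n‖^2 + ‖deriv (fun t' => a t' n) u‖^2)
      + (1/4) * (∑ n₁ ∈ latticeBall N, ∑ n₂ ∈ latticeBall N, ∑ n₃ ∈ latticeBall N,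
          (if nsqZ (n₁ + n₂ + n₃) ≤ (N : ℤ)^2 then
            a u n₁ * a u n₂ * a u n₃ * a u (-(n₁ + n₂ + n₃)) else 0)).re)
    (fun s => (hG s).differentiableAt) (fun s => (hG s).deriv) t₁ t₂
  rw [hsplit t₁, hsplit t₂, hGconst]
  congr 1
  congr 1
  exact tsum_congr fun n => htail n.1 (fun hmem => n.2 (Finset.mem_coe.mpr hmem)) t₁ t₂
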